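/- For all A, B ∈ ℂ and α ∈ ℂ with α ≠ 0, the pairs (f, g) given by f(z) = A·cot(αz), g(z) = B/sin(αz), and by f(z) = A/sin(αz), g(z) = B·cot(αz/2), and by f(z) = A/z, g(z) = B/z, each satisfy the B₂ functional equation: f(x)(g(x+y) + g(x−y)) + f(y)(g(x+y) − g(x−y)) = 0 for all x, y ∈ ℂ such that all the functions appearing are defined (their arguments avoid the respective singular sets). -/

import Mathlib

/-!
STATEMENT 12: The degenerate (trigonometric and rational) pairs
`(A·cot(αz), B/sin(αz))`, `(A/sin(αz), B·cot(αz/2))` and `(A/z, B/z)` satisfy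
the `B₂` functional equation wherever the arguments avoid the singular sets.
-/

open Complex

theorem degenerate_b2_solutions (A B α : ℂ) (hα : α ≠ 0) :
    (∀ x y : ℂ, Complex.sin (α * x) ≠ 0 → Complex.sin (α * y) ≠ 0 →
      Complex.sin (α * (x + y)) ≠ 0 → Complex.sin (α * (x - y)) ≠ 0 →
      (A * Complex.cot (α * x)) *
          (B / Complex.sin (α * (x + y)) + B / Complex.sin (α * (x - y)))
        + (A * Complex.cot (α * y)) *
          (B / Complex.sin (α * (x + y)) - B / Complex.sin (α * (x - y))) = 0) ∧
    (∀ x y : ℂ, Complex.sin (α * x) ≠ 0 → Complex.sin (α * y) ≠ 0 →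
      Complex.sin (α * (x + y) / 2) ≠ 0 → Complex.sin (α * (x - y) / 2) ≠ 0 →
      (A / Complex.sin (α * x)) *
          (B * Complex.cot (α * (x + y) / 2) + B * Complex.cot (α * (x - y) / 2))
        + (A / Complex.sin (α * y)) *
          (B * Complex.cot (α * (x + y) / 2) - B * Complex.cot (α * (x - y) / 2)) = 0) ∧
    (∀ x y : ℂ, x ≠ 0 → y ≠ 0 → x + y ≠ 0 → x - y ≠ 0 →
      (A / x) * (B / (x + y) + B / (x - y))
        + (A / y) * (B / (x + y) - B / (x - y)) = 0) := by
  refine ⟨?_, ?_, ?_⟩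
  · intro x y hx hy hp hm
    have e1 : α * (x + y) = α * x + α * y := by ring
    have e2 : α * (x - y) = α * x - α * y := by ring
    rw [e1] at hp; rw [e2] at hm
    rw [Complex.sin_add] at hp; rw [Complex.sin_sub] at hm
    rw [e1, e2, Complex.sin_add, Complex.sin_sub,
      Complex.cot_eq_cos_div_sin, Complex.cot_eq_cos_div_sin]
    field_simp
    ring
  · intro x y hx hy hp hm
    have hax : Complex.sin (α * x) = 2 * Complex.sin (α * x / 2) * Complex.cos (α * x / 2) := by
      have h := Complex.sin_two_mul (α * x / 2)
      rw [show 2 * (α * x / 2) = α * x by ring] at h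
      rw [h]
    have hay : Complex.sin (α * y) = 2 * Complex.sin (α * y / 2) * Complex.cos (α * y / 2) := by
      have h := Complex.sin_two_mul (α * y / 2)
      rw [show 2 * (α * y / 2) = α * y by ring] at h
      rw [h]
    rw [hax] at hx; rw [hay] at hy
    have hsx : Complex.sin (α * x / 2) ≠ 0 := fun h => hx (by rw [h]; ring)
    have hcx : Complex.cos (α * x / 2) ≠ 0 := fun h => hx (by rw [h]; ring)
    have hsy : Complex.sin (α * y / 2) ≠ 0 := fun h => hy (by rw [h]; ring)
    have hcy : Complex.cos (α * y / 2) ≠ 0 := fun h => hy (by rw [h]; ring)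
    have e3 : α * (x + y) / 2 = α * x / 2 + α * y / 2 := by ring
    have e4 : α * (x - y) / 2 = α * x / 2 - α * y / 2 := by ring
    rw [e3] at hp; rw [e4] at hm
    rw [Complex.sin_add] at hp; rw [Complex.sin_sub] at hm
    rw [hax, hay, e3, e4, Complex.cot_eq_cos_div_sin, Complex.cot_eq_cos_div_sin,
      Complex.sin_add, Complex.sin_sub, Complex.cos_add, Complex.cos_sub]
    field_simp
    linear_combination (2 * A * B * Complex.cos (α * x / 2) * Complex.cos (α * y / 2) *
        Complex.sin (α * x / 2) * Complex.sin (α * y / 2)) *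
      (Complex.sin_sq_add_cos_sq (α * y / 2) - Complex.sin_sq_add_cos_sq (α * x / 2))
  · intro x y hx hy hp hm
    field_simp
    ring
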